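/- Let X be a set with a right self-distributive binary operation ▷, and let C_n = ℤX^{n+1} be the free abelian group on (n+1)-tuples of elements of X. Define ∂_n^{(▷)} : C_n → C_{n−1} on generators by ∂_n^{(▷)}(x_0, …, x_n) = (x_1, …, x_n) + Σ_{i=1}^{n} (−1)^i (x_0 ▷ x_i, …, x_{i−1} ▷ x_i, x_{i+1}, …, x_n). Then ∂_{n−1}^{(▷)} ∘ ∂_n^{(▷)} = 0 for all n ≥ 1, so (C_n, ∂_n^{(▷)}) is a chain complex (the one-term distributive chain complex of (X, ▷)). -/
import Mathlib


/-- The face map `d_{i}` (for `1 ≤ i ≤ n+1`) of a right self-distributive structure,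
sending `(x_0, …, x_{n+1})` to `(x_0 ▷ x_i, …, x_{i-1} ▷ x_i, x_{i+1}, …, x_{n+1})`
(with a junk value when `i` is out of range, which never occurs in its use below). -/
def distribFace {X : Type*} (op : X → X → X) (n : ℕ) (i : ℕ)
    (x : Fin (n + 2) → X) : Fin (n + 1) → X :=
  fun j => if h : (j : ℕ) < i ∧ i < n + 2 then op (x j.castSucc) (x ⟨i, h.2⟩) else x j.succ

/-- The one-term distributive boundary `∂^{(▷)} : ℤX^{n+2} → ℤX^{n+1}`, defined on a
generator `(x_0, …, x_{n+1})` as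
`(x_1, …, x_{n+1}) + Σ_{i=1}^{n+1} (-1)^i (x_0 ▷ x_i, …, x_{i-1} ▷ x_i, x_{i+1}, …, x_{n+1})`. -/
noncomputable def oneTermBoundary {X : Type*} (op : X → X → X) (n : ℕ) :
    ((Fin (n + 2) → X) →₀ ℤ) →ₗ[ℤ] ((Fin (n + 1) → X) →₀ ℤ) :=
  Finsupp.lift ((Fin (n + 1) → X) →₀ ℤ) ℤ (Fin (n + 2) → X) fun x =>
    Finsupp.single (fun j => x j.succ) (1 : ℤ) +
      ∑ i ∈ Finset.Icc 1 (n + 1), ((-1 : ℤ) ^ i) • Finsupp.single (distribFace op n i x) (1 : ℤ)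

lemma dF_pos {X : Type*} (op : X → X → X) (n i kv : ℕ) (hk : kv < n + 1)
    (h1 : kv < i) (h2 : i < n + 2) (x : Fin (n + 2) → X) :
    distribFace op n i x ⟨kv, hk⟩ = op (x ⟨kv, by omega⟩) (x ⟨i, h2⟩) :=
  dif_pos ⟨h1, h2⟩

lemma dF_neg {X : Type*} (op : X → X → X) (n i kv : ℕ) (hk : kv < n + 1)
    (h1 : i ≤ kv) (x : Fin (n + 2) → X) :
    distribFace op n i x ⟨kv, hk⟩ = x ⟨kv + 1, by omega⟩ :=
  dif_neg fun h => absurd h.1 (not_lt.mpr h1)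

lemma distribFace_comp {X : Type*} (op : X → X → X)
    (hop : ∀ a b c : X, op (op a b) c = op (op a c) (op b c))
    (n i j : ℕ) (hij : i ≤ j) (hj : j ≤ n + 1) (x : Fin (n + 3) → X) :
    distribFace op n i (distribFace op (n + 1) (j + 1) x) =
      distribFace op n j (distribFace op (n + 1) i x) := by
  funext k
  obtain ⟨kv, hk⟩ := k
  rcases lt_or_ge kv i with h1 | h1
  · rw [dF_pos op n i kv hk h1 (by omega),
      dF_pos op (n+1) (j+1) kv (by omega) (by omega) (by omega),
      dF_pos op (n+1) (j+1) i (by omega) (by omega) (by omega),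
      dF_pos op n j kv hk (by omega) (by omega),
      dF_pos op (n+1) i kv (by omega) h1 (by omega),
      dF_neg op (n+1) i j (by omega) hij]
    exact (hop _ _ _).symm
  rcases lt_or_ge kv j with h2 | h2
  · rw [dF_neg op n i kv hk h1,
      dF_pos op (n+1) (j+1) (kv+1) (by omega) (by omega) (by omega),
      dF_pos op n j kv hk h2 (by omega),
      dF_neg op (n+1) i kv (by omega) h1,
      dF_neg op (n+1) i j (by omega) hij]
  · rw [dF_neg op n i kv hk h1,
      dF_neg op (n+1) (j+1) (kv+1) (by omega) (by omega),
      dF_neg op n j kv hk h2,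
      dF_neg op (n+1) i (kv+1) (by omega) (by omega)]

lemma distribFace_zero {X : Type*} (op : X → X → X) (n : ℕ) (x : Fin (n + 2) → X) :
    distribFace op n 0 x = fun j => x j.succ := by
  funext j; simp [distribFace]

lemma oneTermBoundary_single {X : Type*} (op : X → X → X) (n : ℕ) (x : Fin (n + 2) → X) :
    oneTermBoundary op n (Finsupp.single x 1) =
      ∑ i ∈ Finset.range (n + 2),
        ((-1 : ℤ) ^ i) • Finsupp.single (distribFace op n i x) (1 : ℤ) := by
  have hr : Finset.range (n + 2) = insert 0 (Finset.Icc 1 (n + 1)) := by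
    ext m; simp; omega
  rw [hr, Finset.sum_insert (by simp), oneTermBoundary, Finsupp.lift_apply,
    Finsupp.sum_single_index (by simp), one_smul, pow_zero, one_smul, distribFace_zero]

lemma oneTermBoundary_sq_single {X : Type*} (op : X → X → X)
    (hop : ∀ a b c : X, op (op a b) c = op (op a c) (op b c))
    (n : ℕ) (x : Fin (n + 3) → X) :
    oneTermBoundary op n (oneTermBoundary op (n + 1) (Finsupp.single x 1)) = 0 := by
  rw [oneTermBoundary_single, map_sum]
  simp only [map_smul, oneTermBoundary_single]
  have step : ∀ i ∈ Finset.range (n + 3),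
      ((-1 : ℤ) ^ i) • ∑ k ∈ Finset.range (n + 2),
        ((-1 : ℤ) ^ k) • Finsupp.single (distribFace op n k (distribFace op (n+1) i x)) (1 : ℤ)
      = ∑ k ∈ Finset.range (n + 2), ((-1 : ℤ) ^ (i + k)) •
          Finsupp.single (distribFace op n k (distribFace op (n+1) i x)) (1 : ℤ) := by
    intro i _
    rw [Finset.smul_sum]
    exact Finset.sum_congr rfl fun k _ => by rw [smul_smul, ← pow_add]
  rw [Finset.sum_congr rfl step, ← Finset.sum_product']
  refine Finset.sum_involution
    (fun p _ => if p.2 < p.1 then (p.2, p.1 - 1) else (p.2 + 1, p.1)) ?_ ?_ ?_ ?_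
  · rintro ⟨i, k⟩ hp
    simp only [Finset.mem_product, Finset.mem_range] at hp
    by_cases h : k < i
    · simp only [h, if_pos]
      have harg : distribFace op n (i - 1) (distribFace op (n + 1) k x)
          = distribFace op n k (distribFace op (n + 1) i x) := by
        have := (distribFace_comp op hop n k (i - 1) (by omega) (by omega) x).symm
        rwa [show i - 1 + 1 = i by omega] at this
      rw [harg, ← add_smul]
      convert zero_smul ℤ _
      have he : i + k = (k + (i - 1)) + 1 := by omega
      rw [he, pow_succ]; ring
    · simp only [h, if_neg, not_false_iff]
      have harg : distribFace op n i (distribFace op (n + 1) (k + 1) x)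
          = distribFace op n k (distribFace op (n + 1) i x) :=
        distribFace_comp op hop n i k (by omega) (by omega) x
      rw [harg, ← add_smul]
      convert zero_smul ℤ _
      have he : (k + 1) + i = (i + k) + 1 := by omega
      rw [he, pow_succ]; ring
  · rintro ⟨i, k⟩ hp _ heq
    by_cases h : k < i <;> simp only [h, if_pos, if_neg, not_false_iff, Prod.mk.injEq] at heq <;>
      omega
  · rintro ⟨i, k⟩ hp
    simp only [Finset.mem_product, Finset.mem_range] at hp ⊢
    by_cases h : k < i <;> simp only [h, if_pos, if_neg, not_false_iff] <;>
      exact ⟨by omega, by omega⟩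
  · rintro ⟨i, k⟩ hp
    by_cases h : k < i
    · simp only [h, if_pos]
      rw [if_neg (by omega)]
      exact Prod.ext (by simp; omega) rfl
    · simp only [h, if_neg, not_false_iff]
      rw [if_pos (by omega)]
      exact Prod.ext rfl (by simp)

/-- **The one-term distributive chain complex.** If `▷` is right self-distributive then
`∂^{(▷)}_{n} ∘ ∂^{(▷)}_{n+1} = 0` (here `oneTermBoundary op n` is the boundary
`C_{n+1} = ℤX^{n+2} → C_n = ℤX^{n+1}`). -/
theorem oneTermBoundary_squared_zero {X : Type*} (op : X → X → X)
    (hop : ∀ a b c : X, op (op a b) c = op (op a c) (op b c)) :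
    ∀ n : ℕ, (oneTermBoundary op n).comp (oneTermBoundary op (n + 1)) = 0 := by
  intro n
  refine Finsupp.lhom_ext fun x b => ?_
  have hb : (Finsupp.single x b : (Fin (n + 3) → X) →₀ ℤ) = b • Finsupp.single x 1 := by
    rw [Finsupp.smul_single, smul_eq_mul, mul_one]
  rw [hb, map_smul, map_smul, LinearMap.comp_apply, oneTermBoundary_sq_single op hop, smul_zero]
  simp
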